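/- For every natural number d and all real numbers n′, n″, δ, one has ∑_{u=0}^{d} 2^u · C(-n″, d-u) · C(δ-n′, u) = (-2)^d · P^{a,b}_d(0), where a = n″ + n′ - δ - 1 and b = δ - n′ - d. -/

import Mathlib

/-- The generalized binomial coefficient `C(a,k) = a(a-1)⋯(a-k+1)/k!`, with `C(a,0) = 1`. -/
noncomputable def gchoose (a : ℝ) (k : ℕ) : ℝ :=
  (∏ i ∈ Finset.range k, (a - i)) / (k.factorial : ℝ)

/-- The Jacobi polynomial
`P^{a,b}_n(ξ) = 2^{-n} ∑_{k=0}^{n} C(a+n, n-k) · C(n+b, k) · (ξ-1)^k (ξ+1)^{n-k}`. -/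
noncomputable def jacobiP (a b : ℝ) (n : ℕ) (ξ : ℝ) : ℝ :=
  ((2 : ℝ) ^ n)⁻¹ * ∑ k ∈ Finset.range (n + 1),
    gchoose (a + n) (n - k) * gchoose ((n : ℝ) + b) k * (ξ - 1) ^ k * (ξ + 1) ^ (n - k)

open Polynomial in
lemma descPochhammer_smeval_real (r : ℝ) (k : ℕ) :
    (descPochhammer ℤ k).smeval r = ∏ i ∈ Finset.range k, (r - i) := by
  induction k with
  | zero => simp [descPochhammer_zero, smeval_one]
  | succ k ih =>
      rw [descPochhammer_succ_right, smeval_mul, ih, smeval_sub, smeval_X,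
        smeval_natCast, Finset.prod_range_succ]
      ring

lemma gchoose_eq_ringChoose (r : ℝ) (k : ℕ) : gchoose r k = Ring.choose r k := by
  have h := Ring.descPochhammer_eq_factorial_smul_choose (R := ℝ) r k
  rw [descPochhammer_smeval_real, nsmul_eq_mul] at h
  rw [gchoose, h]
  exact mul_div_cancel_left₀ _ (by exact_mod_cast k.factorial_ne_zero)

lemma gchoose_reflect (c : ℝ) (m : ℕ) :
    gchoose ((m : ℝ) - c - 1) m = (-1 : ℝ) ^ m * gchoose c m := by
  unfold gchoose
  rw [← mul_div_assoc]
  congr 1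
  rw [← Finset.prod_range_reflect (fun i => ((m : ℝ) - c - 1 - i)) m]
  have h1 : ∀ j ∈ Finset.range m, ((m : ℝ) - c - 1 - ((m - 1 - j : ℕ) : ℝ)) = -1 * (c - j) := by
    intro j hj
    rw [Finset.mem_range] at hj
    have : ((m - 1 - j : ℕ) : ℝ) = (m : ℝ) - 1 - j := by
      have h2 : 1 + j ≤ m := by omega
      push_cast [Nat.sub_sub, Nat.cast_sub h2]
      ring
    rw [this]; ring
  rw [Finset.prod_congr rfl h1, Finset.prod_mul_distrib, Finset.prod_const, Finset.card_range]

/-- The paper's lemma expressing the combinatorial sum arising from the Segre-class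
computation of the Seiberg-Witten link pairing in terms of a Jacobi polynomial at `0`:
`∑_{u=0}^{d} 2^u · C(-n″, d-u) · C(δ-n′, u) = (-2)^d · P^{a,b}_d(0)` where
`a = n″ + n′ - δ - 1` and `b = δ - n′ - d`. -/
theorem sum_eq_neg_two_pow_mul_jacobiP (d : ℕ) (n' n'' δ : ℝ) :
    ∑ u ∈ Finset.range (d + 1),
        2 ^ u * gchoose (-n'') (d - u) * gchoose (δ - n') u
      = (-2 : ℝ) ^ d * jacobiP (n'' + n' - δ - 1) (δ - n' - d) d 0 := by
  set x : ℝ := δ - n' with hx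
  set A : ℝ := n'' + n' - δ - 1 + d with hA
  have step1 : ∀ u ∈ Finset.range (d + 1),
      2 ^ u * gchoose (-n'') (d - u) * gchoose x u
        = ∑ k ∈ Finset.range (u + 1),
            gchoose (-n'') (d - u) * (gchoose x k * gchoose (x - k) (u - k)) := by
    intro u _
    have h2 : (2 : ℝ) ^ u = ∑ k ∈ Finset.range (u + 1), (u.choose k : ℝ) := by
      exact_mod_cast (Nat.sum_range_choose u).symm
    rw [h2, Finset.sum_mul, Finset.sum_mul]
    refine Finset.sum_congr rfl fun k hk => ?_
    have hku : k ≤ u := Nat.lt_succ_iff.mp (Finset.mem_range.mp hk)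
    have hs := Ring.choose_smul_choose (R := ℝ) x (n := u) (k := k) hku
    rw [nsmul_eq_mul] at hs
    simp only [gchoose_eq_ringChoose]
    calc (u.choose k : ℝ) * Ring.choose (-n'') (d - u) * Ring.choose x u
        = Ring.choose (-n'') (d - u) * ((u.choose k : ℝ) * Ring.choose x u) := by ring
      _ = _ := by rw [hs]
  rw [Finset.sum_congr rfl step1]
  have swap := Finset.sum_Ico_Ico_comm 0 (d + 1)
      (fun k u => gchoose (-n'') (d - u) * (gchoose x k * gchoose (x - k) (u - k)))
  simp only [Finset.range_eq_Ico]
  rw [← swap]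
  have inner : ∀ k ∈ Finset.Ico 0 (d + 1),
      (∑ u ∈ Finset.Ico k (d + 1),
          gchoose (-n'') (d - u) * (gchoose x k * gchoose (x - k) (u - k)))
        = gchoose x k * ((-1 : ℝ) ^ (d - k) * gchoose A (d - k)) := by
    intro k hk
    have hkd : k ≤ d := by simpa using Nat.lt_succ_iff.mp (Finset.mem_Ico.mp hk).2
    rw [Finset.sum_Ico_eq_sum_range]
    have hcount : d + 1 - k = (d - k) + 1 := by omega
    rw [hcount]
    have hterm : ∀ j ∈ Finset.range ((d - k) + 1),
        gchoose (-n'') (d - (k + j)) * (gchoose x k * gchoose (x - k) (k + j - k))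
          = gchoose x k * (gchoose (x - k) j * gchoose (-n'') ((d - k) - j)) := by
      intro j _
      have e1 : k + j - k = j := by omega
      have e2 : d - (k + j) = (d - k) - j := by omega
      rw [e1, e2]; ring
    rw [Finset.sum_congr rfl hterm, ← Finset.mul_sum]
    congr 1
    have hv := Ring.add_choose_eq (R := ℝ) (r := x - k) (s := -n'') (d - k) (Commute.all _ _)
    rw [Finset.Nat.sum_antidiagonal_eq_sum_range_succ_mk] at hv
    simp only [gchoose_eq_ringChoose]
    rw [← hv]
    have e3 : x - (k : ℝ) + -n'' = ((d - k : ℕ) : ℝ) - A - 1 := by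
      rw [Nat.cast_sub hkd, hA, hx]; ring
    rw [← gchoose_eq_ringChoose, ← gchoose_eq_ringChoose, e3, gchoose_reflect]
  rw [Finset.sum_congr rfl inner]
  unfold jacobiP
  simp only [Finset.range_eq_Ico]
  rw [← mul_assoc]
  have hpow2 : (-2 : ℝ) ^ d * ((2 : ℝ) ^ d)⁻¹ = (-1 : ℝ) ^ d := by
    rw [neg_pow]
    field_simp
  rw [hpow2, Finset.mul_sum]
  refine Finset.sum_congr rfl fun k hk => ?_
  have hkd : k ≤ d := by simpa using Nat.lt_succ_iff.mp (Finset.mem_Ico.mp hk).2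
  have e4 : (d : ℝ) + (δ - n' - d) = x := by rw [hx]; ring
  rw [e4]
  have hpow : (-1 : ℝ) ^ (d - k) * (-1 : ℝ) ^ k = (-1 : ℝ) ^ d := by
    rw [← pow_add]; congr 1; omega
  rw [← hpow]
  have h2 : (-1 : ℝ) ^ (k * 2) = 1 := by
    rw [pow_mul']; norm_num
  have e5 : (0 : ℝ) - 1 = -1 := by norm_num
  have e6 : ((0 : ℝ) + 1) ^ (d - k) = 1 := by norm_num
  rw [e5, e6]
  linear_combination (-(gchoose x k * gchoose A (d - k) * (-1 : ℝ) ^ (d - k))) * h2
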